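/- Let P be a binary partial group and BP_n ⊆ P^n the set of words all of whose full parenthesizations yield defined and equal products. If w = (a_1, ..., a_n) ∈ BP_n, then for every 0 ≤ k ≤ n the word w^(k) = (a_k†, ..., a_1†, a_1, ..., a_n) lies in BP_{n+k}, and its common product equals the product a_{k+1}···a_n (interpreted as 1 when k = n). -/

import Mathlib

/-- A unital partial magma: a partially defined binary operation (encoded via
`Option`) with a two-sided unit. -/
structure UnitalPartialMagma (P : Type*) where
  mul : P → P → Option P
  one : P
  mul_one : ∀ a, mul a one = some a
  one_mul : ∀ a, mul one a = some a

/-- A binary partial group: a unital partial magma where each element has an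
inverse `inv a` with: `a*b` defined implies `(inv a)*(a*b)` defined and equal
to `b`, and `b*a` defined implies `(b*a)*(inv a)` defined and equal to `b`. -/
structure BinaryPartialGroup (P : Type*) extends UnitalPartialMagma P where
  inv : P → P
  inv_left : ∀ a b c, mul a b = some c → mul (inv a) c = some b
  inv_right : ∀ a b c, mul b a = some c → mul c (inv a) = some b

/-- Full parenthesizations of words, as binary trees. -/
inductive PTree : Type where
  | leaf : PTree
  | node : PTree → PTree → PTree

/-- The number of letters a parenthesization applies to. -/
def PTree.size : PTree → Nat
  | .leaf => 1
  | .node l r => l.size + r.size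

/-- The mirrored parenthesization. -/
def PTree.mirror : PTree → PTree
  | .leaf => .leaf
  | .node l r => .node r.mirror l.mirror

/-- The partial iterated multiplication of a word determined by a full
parenthesization. -/
def evalTree {P : Type*} (M : UnitalPartialMagma P) : PTree → List P → Option P
  | .leaf, [a] => some a
  | .leaf, _ => none
  | .node l r, w =>
      (evalTree M l (w.take l.size)).bind fun x =>
        (evalTree M r (w.drop l.size)).bind fun y => M.mul x y

/-- `IsProd M w a` says that every full parenthesization of the word `w` gives a
defined iterated product, and all these products equal `a`; the empty word has
product the unit.  Thus `w ∈ BP_n` iff `∃ a, IsProd M w a`. -/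
def IsProd {P : Type*} (M : UnitalPartialMagma P) (w : List P) (a : P) : Prop :=
  (w = [] → a = M.one) ∧ ∀ t : PTree, t.size = w.length → evalTree M t w = some a

namespace Aux

variable {P : Type*}

theorem size_pos (t : PTree) : 0 < t.size := by
  induction t with
  | leaf => simp [PTree.size]
  | node l r hl hr => simp [PTree.size]; omega

/-- a right comb of given size -/
def comb : ℕ → PTree
  | 0 => .leaf
  | n + 1 => .node .leaf (comb n)

theorem comb_size (n : ℕ) : (comb n).size = n + 1 := by
  induction n with
  | zero => rfl
  | succ n ih => simp [comb, PTree.size, ih]; omega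

theorem exists_tree (n : ℕ) (hn : 0 < n) : ∃ t : PTree, t.size = n :=
  ⟨comb (n - 1), by rw [comb_size]; omega⟩

/- group lemmas -/
theorem mul_inv_self (G : BinaryPartialGroup P) (a : P) :
    G.mul a (G.inv a) = some G.one :=
  G.inv_right a G.one a (G.one_mul a)

theorem inv_self_mul (G : BinaryPartialGroup P) (a : P) :
    G.mul (G.inv a) a = some G.one :=
  G.inv_left a G.one a (G.mul_one a)

theorem inv_inv (G : BinaryPartialGroup P) (a : P) : G.inv (G.inv a) = a := by
  have h1 := G.inv_left (G.inv a) a G.one (inv_self_mul G a)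
  have h2 := G.mul_one (G.inv (G.inv a))
  rw [h1] at h2
  exact (Option.some.inj h2).symm

theorem inv_mul (G : BinaryPartialGroup P) {x y z : P} (h : G.mul x y = some z) :
    G.mul (G.inv y) (G.inv x) = some (G.inv z) := by
  have h1 := G.inv_left x y z h
  have h2 := G.inv_right z (G.inv x) y h1
  exact G.inv_left y (G.inv z) (G.inv x) h2

theorem cancel_right (G : BinaryPartialGroup P) {x x' y a : P}
    (h : G.mul x y = some a) (h' : G.mul x' y = some a) : x = x' := by
  have h1 := G.inv_right y x a h
  have h2 := G.inv_right y x' a h'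
  rw [h2] at h1
  exact (Option.some.inj h1).symm

theorem cancel_left (G : BinaryPartialGroup P) {x y y' a : P}
    (h : G.mul x y = some a) (h' : G.mul x y' = some a) : y = y' := by
  have h1 := G.inv_left x y a h
  have h2 := G.inv_left x y' a h'
  rw [h2] at h1
  exact (Option.some.inj h1).symm

theorem isProd_nil (M : UnitalPartialMagma P) : IsProd M [] M.one := by
  refine ⟨fun _ => rfl, fun t ht => ?_⟩
  exact absurd ht (by have := size_pos t; simp; omega)

theorem isProd_unique {M : UnitalPartialMagma P} {w : List P} {a a' : P}
    (h : IsProd M w a) (h' : IsProd M w a') : a = a' := by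
  rcases eq_or_ne w [] with rfl | hw
  · rw [h.1 rfl, h'.1 rfl]
  · obtain ⟨t, ht⟩ := exists_tree w.length (by simpa [List.length_pos_iff] using hw)
    have e1 := h.2 t ht
    have e2 := h'.2 t ht
    rw [e1] at e2
    exact Option.some.inj e2

theorem isProd_singleton {M : UnitalPartialMagma P} {x a : P}
    (h : IsProd M [x] a) : a = x := by
  have := h.2 .leaf rfl
  simpa [evalTree] using this.symm

/-- splitting lemma -/
theorem splitProd (G : BinaryPartialGroup P) {u v : List P} {ab : P}
    (h : IsProd G.toUnitalPartialMagma (u ++ v) ab) :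
    ∃ x y, IsProd G.toUnitalPartialMagma u x ∧ IsProd G.toUnitalPartialMagma v y ∧
      G.mul x y = some ab := by
  set M := G.toUnitalPartialMagma with hM
  rcases eq_or_ne u [] with rfl | hu
  · exact ⟨M.one, ab, isProd_nil M, by simpa using h, M.one_mul ab⟩
  rcases eq_or_ne v [] with rfl | hv
  · exact ⟨ab, M.one, by simpa using h, isProd_nil M, M.mul_one ab⟩
  obtain ⟨tu, htu⟩ := exists_tree u.length (by simpa [List.length_pos_iff] using hu)
  obtain ⟨tv, htv⟩ := exists_tree v.length (by simpa [List.length_pos_iff] using hv)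
  have hnode : (PTree.node tu tv).size = (u ++ v).length := by
    simp [PTree.size, htu, htv]
  have he := h.2 _ hnode
  rw [show evalTree M (.node tu tv) (u ++ v) = (evalTree M tu ((u ++ v).take tu.size)).bind
      fun x => (evalTree M tv ((u ++ v).drop tu.size)).bind fun y => M.mul x y from rfl,
    htu, List.take_left, List.drop_left] at he
  obtain ⟨x, hx, hrest⟩ := Option.bind_eq_some_iff.mp he
  obtain ⟨y, hy, hmul⟩ := Option.bind_eq_some_iff.mp hrest
  refine ⟨x, y, ⟨fun hh => absurd hh hu, fun t ht => ?_⟩,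
    ⟨fun hh => absurd hh hv, fun t ht => ?_⟩, hmul⟩
  · -- all trees on u give x
    have hnode' : (PTree.node t tv).size = (u ++ v).length := by
      simp [PTree.size, ht, htv]
    have he' := h.2 _ hnode'
    rw [show evalTree M (.node t tv) (u ++ v) = (evalTree M t ((u ++ v).take t.size)).bind
        fun x => (evalTree M tv ((u ++ v).drop t.size)).bind fun y => M.mul x y from rfl,
      ht, List.take_left, List.drop_left, hy] at he'
    obtain ⟨x', hx', hmul'⟩ := Option.bind_eq_some_iff.mp he'
    simp only [Option.bind_some] at hmul'
    rw [hx']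
    exact congrArg some (cancel_right G hmul' hmul)
  · -- all trees on v give y
    have hnode' : (PTree.node tu t).size = (u ++ v).length := by
      simp [PTree.size, ht, htu]
    have he' := h.2 _ hnode'
    rw [show evalTree M (.node tu t) (u ++ v) = (evalTree M tu ((u ++ v).take tu.size)).bind
        fun x => (evalTree M t ((u ++ v).drop tu.size)).bind fun y => M.mul x y from rfl,
      htu, List.take_left, List.drop_left, hx, Option.bind_some] at he'
    obtain ⟨y', hy', hmul'⟩ := Option.bind_eq_some_iff.mp he'
    rw [hy']
    exact congrArg some (cancel_left G hmul' hmul)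

end Aux

namespace Aux2
open Aux

variable {P : Type*}

/-- signed interval product -/
def sg (G : BinaryPartialGroup P) (c : ℕ → ℕ → P) (x y : ℕ) : P :=
  if x ≤ y then c x y else G.inv (c y x)

theorem sg_coh (G : BinaryPartialGroup P) (c : ℕ → ℕ → P)
    (hcoh : ∀ i j l, i ≤ j → j ≤ l → G.mul (c i j) (c j l) = some (c i l)) :
    ∀ x y z, G.mul (sg G c x y) (sg G c y z) = some (sg G c x z) := by
  intro x y z
  by_cases hxy : x ≤ y <;> by_cases hyz : y ≤ z <;> by_cases hxz : x ≤ z <;>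
    simp only [sg, if_pos, if_neg, hxy, hyz, hxz, if_true, if_false]
  · exact hcoh x y z hxy hyz
  · omega
  · exact G.inv_right _ _ _ (hcoh x z y hxz (le_of_not_ge hyz))
  · -- x ≤ y, z < y, z < x
    have h0 := hcoh z x y (le_of_not_ge hxz) hxy
    have h1 := G.inv_left _ _ _ h0
    exact G.inv_right _ _ _ h1
  · exact G.inv_left _ _ _ (hcoh y x z (le_of_not_ge hxy) hxz)
  · -- y < x, y ≤ z, z < x
    have h0 := hcoh y z x hyz (le_of_not_ge hxz)
    have h1 := inv_mul G h0
    have h2 := G.inv_right _ _ _ h1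
    rwa [Aux.inv_inv] at h2
  · omega
  · exact inv_mul G (hcoh z y x (le_of_not_ge hyz) (le_of_not_ge hxy))

theorem evalCoherent (M : UnitalPartialMagma P) (v : List P) (f : ℕ → ℕ → P)
    (hlet : ∀ i (h : i < v.length), f i (i + 1) = v[i])
    (hcoh : ∀ i j l, i ≤ j → j ≤ l → M.mul (f i j) (f j l) = some (f i l)) :
    ∀ (t : PTree) (i j : ℕ), i ≤ j → j ≤ v.length → t.size = j - i →
      evalTree M t ((v.drop i).take (j - i)) = some (f i j) := by
  intro t
  induction t with
  | leaf =>
    intro i j hij hj hs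
    simp only [PTree.size] at hs
    have h1 : j = i + 1 := by omega
    subst h1
    have hi : i < v.length := by omega
    rw [show i + 1 - i = 1 from by omega, List.drop_eq_getElem_cons hi,
      List.take_succ_cons, List.take_zero]
    simp [evalTree, hlet i hi]
  | node l r ihl ihr =>
    intro i j hij hj hs
    simp only [PTree.size] at hs
    have hsl := size_pos l
    have hsr := size_pos r
    set m := i + l.size with hm
    have h1 : ((v.drop i).take (j - i)).take l.size = (v.drop i).take (m - i) := by
      rw [List.take_take]; congr 1; omega
    have h2 : ((v.drop i).take (j - i)).drop l.size = (v.drop m).take (j - m) := by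
      rw [List.drop_take, List.drop_drop, ← hm]; congr 1; omega
    rw [show evalTree M (.node l r) ((v.drop i).take (j - i)) =
        (evalTree M l (((v.drop i).take (j - i)).take l.size)).bind fun x =>
          (evalTree M r (((v.drop i).take (j - i)).drop l.size)).bind fun y =>
            M.mul x y from rfl, h1, h2,
      ihl i m (by omega) (by omega) (by omega), ihr m j (by omega) (by omega) (by omega)]
    simp only [Option.bind_some]
    exact hcoh i m j (by omega) (by omega)

end Aux2

namespace Aux2

def ridx (k i : ℕ) : ℕ := if i ≤ k then k - i else i - k

theorem ridx_le (k i : ℕ) (h : i ≤ k) : ridx k i = k - i := if_pos h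

theorem ridx_ge (k i : ℕ) (h : k ≤ i) : ridx k i = i - k := by
  unfold ridx; split <;> omega

end Aux2

open Aux Aux2 in
/-- If `w = (a_1, …, a_n) ∈ BP_n` and `0 ≤ k ≤ n`, then the word
`w^(k) = (a_k†, …, a_1†, a_1, …, a_n)` lies in `BP_{n+k}` and its common
product equals the common product of `(a_{k+1}, …, a_n)` (which is `1` when
`k = n`). -/
theorem stmt_13 {P : Type*} (G : BinaryPartialGroup P) (w : List P) (a : P)
    (h : IsProd G.toUnitalPartialMagma w a) (k : ℕ) (hk : k ≤ w.length) :
    ∃ b, IsProd G.toUnitalPartialMagma (w.drop k) b ∧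
      IsProd G.toUnitalPartialMagma (((w.take k).map G.inv).reverse ++ w) b := by
  classical
  set M := G.toUnitalPartialMagma with hM
  -- interval products exist
  have hex : ∀ i j : ℕ, ∃ x, IsProd M ((w.drop i).take (j - i)) x := by
    intro i j
    have h0 : IsProd M (w.take i ++ w.drop i) a := by rwa [List.take_append_drop]
    obtain ⟨x, y, hx, hy, hxy⟩ := splitProd G h0
    have h1 : IsProd M (((w.drop i).take (j - i)) ++ ((w.drop i).drop (j - i))) y := by
      rwa [List.take_append_drop]
    obtain ⟨x2, y2, hx2, hy2, _⟩ := splitProd G h1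
    exact ⟨x2, hx2⟩
  choose c hc using hex
  -- list interval identity
  have hint : ∀ i j l : ℕ, i ≤ j → j ≤ l →
      (w.drop i).take (l - i) = (w.drop i).take (j - i) ++ (w.drop j).take (l - j) := by
    intro i j l hij hjl
    conv_lhs => rw [← List.take_append_drop (j - i) ((w.drop i).take (l - i))]
    congr 1
    · rw [List.take_take]; congr 1; omega
    · rw [List.drop_take, List.drop_drop, show i + (j - i) = j from by omega,
        show l - i - (j - i) = l - j from by omega]
  -- coherence
  have hcoh : ∀ i j l : ℕ, i ≤ j → j ≤ l → M.mul (c i j) (c j l) = some (c i l) := by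
    intro i j l hij hjl
    have h0 := hc i l
    rw [hint i j l hij hjl] at h0
    obtain ⟨x, y, hx, hy, hxy⟩ := splitProd G h0
    rwa [isProd_unique hx (hc i j), isProd_unique hy (hc j l)] at hxy
  -- letters
  have hlet : ∀ i (hi : i < w.length), c i (i + 1) = w[i] := by
    intro i hi
    have h0 := hc i (i + 1)
    rw [show i + 1 - i = 1 from by omega, List.drop_eq_getElem_cons hi,
      List.take_succ_cons, List.take_zero] at h0
    exact isProd_singleton h0
  -- empty intervals
  have hzero : ∀ i : ℕ, c i i = M.one := by
    intro i
    have h0 := hc i i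
    rw [Nat.sub_self, List.take_zero] at h0
    exact h0.1 rfl
  -- lengths
  have hlen1 : (((w.take k).map G.inv).reverse).length = k := by
    simp [List.length_take]; omega
  have hlen' : ((((w.take k).map G.inv).reverse) ++ w).length = k + w.length := by
    rw [List.length_append, hlen1]
  -- letter condition for the reflected family
  have hlet' : ∀ i (hi : i < ((((w.take k).map G.inv).reverse) ++ w).length),
      sg G c (ridx k i) (ridx k (i + 1)) = ((((w.take k).map G.inv).reverse) ++ w)[i] := by
    intro i hi
    have hi' : i < k + w.length := by rwa [hlen'] at hi
    by_cases hik : i < k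
    · have hl1 : i < (((w.take k).map G.inv).reverse).length := by rw [hlen1]; omega
      rw [List.getElem_append_left hl1, List.getElem_reverse]
      simp only [List.getElem_map, List.getElem_take, List.length_map, List.length_take]
      rw [ridx_le k i (by omega), ridx_le k (i + 1) (by omega),
        show sg G c (k - i) (k - (i + 1)) = G.inv (c (k - (i + 1)) (k - i)) from
          if_neg (by omega),
        show k - i = (k - (i + 1)) + 1 from by omega,
        hlet (k - (i + 1)) (by omega)]
      simp only [show k - (i + 1) = min k w.length - 1 - i from by omega]
    · have hl1 : (((w.take k).map G.inv).reverse).length ≤ i := by rw [hlen1]; omega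
      rw [List.getElem_append_right hl1]
      simp only [hlen1]
      rw [ridx_ge k i (by omega), ridx_ge k (i + 1) (by omega),
        show sg G c (i - k) (i + 1 - k) = c (i - k) (i + 1 - k) from if_pos (by omega),
        show i + 1 - k = (i - k) + 1 from by omega,
        hlet (i - k) (by omega)]
  -- coherence for the reflected family
  have hcohf' : ∀ i j l : ℕ, i ≤ j → j ≤ l →
      M.mul (sg G c (ridx k i) (ridx k j)) (sg G c (ridx k j) (ridx k l)) =
        some (sg G c (ridx k i) (ridx k l)) :=
    fun i j l _ _ => sg_coh G c hcoh _ _ _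
  refine ⟨c k w.length, ?_, ?_⟩
  · have h0 := hc k w.length
    rwa [show w.length - k = (w.drop k).length from (List.length_drop ..).symm,
      List.take_length] at h0
  · constructor
    · intro hnil
      rw [hnil] at hlen'
      simp only [List.length_nil] at hlen'
      have hk0 : k = 0 := by omega
      have hn0 : w.length = 0 := by omega
      rw [hk0, hn0]
      exact hzero 0
    · intro t ht
      have he := evalCoherent M ((((w.take k).map G.inv).reverse) ++ w)
        (fun i j => sg G c (ridx k i) (ridx k j)) hlet' hcohf' t 0
        ((((w.take k).map G.inv).reverse) ++ w).length (by omega) le_rfl (by rw [ht]; omega)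
      rw [List.drop_zero, Nat.sub_zero, List.take_length] at he
      rw [he]
      have e0 : ridx k 0 = k := by rw [ridx_le k 0 (by omega)]; omega
      have e1 : ridx k ((((w.take k).map G.inv).reverse) ++ w).length = w.length := by
        rw [hlen', ridx_ge k (k + w.length) (by omega)]; omega
      simp only [e0, e1, sg]
      rw [if_pos hk]
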